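/- The space I₁ of canonically integrable functions over a pre-integration space is complete with respect to the 1-norm: every Cauchy sequence Γ : ℕ → I₁ (with a strictly increasing modulus M such that ∫|Γ(n) − Γ(m)| ≤ 2^{-p} for all n, m ≥ M(p)) converges in 1-norm to some α ∈ I₁, with an explicit modulus of convergence. -/

import Mathlib

open Filter Topology

/-- A pre-integration space `(X, I, Λ, ∫)`: an inhabited set `X` with an
apartness relation, an `I`-set `Λ` of real-valued partial functions on `X`
(each index `i` has a domain `dom i` and a function `f i`, and equal partial
functions have equal indices), operations on `I` realizing scalar
multiplication, addition, absolute value and min-with-1 of the partial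
functions, and a functional `∫ = integ : I → ℝ` satisfying (PIS1)–(PIS4). -/
structure PreIntegrationSpace (X I : Type*) where
  inhab : Nonempty X
  apart : X → X → Prop
  apart_irrefl : ∀ x y : X, x = y → apart x y → False
  apart_symm : ∀ x y : X, apart x y → apart y x
  apart_cotrans : ∀ x y : X, apart x y → ∀ z : X, apart x z ∨ apart y z
  dom : I → Set X
  f : I → X → ℝ
  lam_set : ∀ i j : I, dom i = dom j → (∀ x ∈ dom i, f i x = f j x) → i = j
  smul : ℝ → I → I
  add : I → I → I
  abs : I → I
  min1 : I → I
  integ : I → ℝ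
  dom_smul : ∀ a i, dom (smul a i) = dom i
  f_smul : ∀ a i, ∀ x ∈ dom i, f (smul a i) x = a * f i x
  dom_add : ∀ i j, dom (add i j) = dom i ∩ dom j
  f_add : ∀ i j, ∀ x ∈ dom i ∩ dom j, f (add i j) x = f i x + f j x
  dom_abs : ∀ i, dom (abs i) = dom i
  f_abs : ∀ i, ∀ x ∈ dom i, f (abs i) x = |f i x|
  dom_min1 : ∀ i, dom (min1 i) = dom i
  f_min1 : ∀ i, ∀ x ∈ dom i, f (min1 i) x = min (f i x) 1
  pis1 : ∀ (a b : ℝ) (i j : I),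
    integ (add (smul a i) (smul b j)) = a * integ i + b * integ j
  pis2 : ∀ (i : I) (α : ℕ → I) (ℓ : ℝ),
    (∀ m, ∀ x ∈ dom (α m), 0 ≤ f (α m) x) →
    Tendsto (fun n => ∑ k ∈ Finset.range n, integ (α k)) atTop (𝓝 ℓ) →
    ℓ < integ i →
    ∃ x, x ∈ dom i ∧ (∀ n, x ∈ dom (α n)) ∧
      ∃ ℓ' : ℝ, Tendsto (fun n => ∑ k ∈ Finset.range n, f (α k) x) atTop (𝓝 ℓ') ∧
        ℓ' < f i x
  pis3 : ∃ i : I, integ i = 1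
  pis4 : ∀ i : I,
    Tendsto (fun m : ℕ => integ (smul (m : ℝ) (min1 (smul ((m : ℝ))⁻¹ i))))
      atTop (𝓝 (integ i)) ∧
    Tendsto (fun m : ℕ => integ (smul ((m : ℝ))⁻¹ (min1 (smul (m : ℝ) (abs i)))))
      atTop (𝓝 0)

variable {X I : Type*}

/-- Partial sums in the index set: `psum P α N = α(0) + ⋯ + α(N)`. -/
def psum (P : PreIntegrationSpace X I) (α : ℕ → I) : ℕ → I
  | 0 => α 0
  | n + 1 => P.add (psum P α n) (α (n + 1))

/-- `α : ℕ → I` is a representation, i.e. a member of `I₁`: the series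
`∑_n ∫|α(n)|` converges. -/
def InI1 (P : PreIntegrationSpace X I) (α : ℕ → I) : Prop :=
  ∃ L : ℝ,
    Tendsto (fun N => ∑ k ∈ Finset.range N, P.integ (P.abs (α k))) atTop (𝓝 L)

/-- The domain of the canonically integrable function represented by `α`:
the points of `⋂_n dom f_{α(n)}` where `∑_n |f_{α(n)}(x)|` converges. -/
def dom1 (P : PreIntegrationSpace X I) (α : ℕ → I) : Set X :=
  {x | (∀ n, x ∈ P.dom (α n)) ∧
    ∃ s : ℝ,
      Tendsto (fun N => ∑ k ∈ Finset.range N, |P.f (α k) x|) atTop (𝓝 s)}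

/-- The canonically integrable function represented by `α`:
`g_α(x) = ∑_n f_{α(n)}(x)`. -/
noncomputable def g1 (P : PreIntegrationSpace X I) (α : ℕ → I) (x : X) : ℝ :=
  ∑' n, P.f (α n) x

/-- `L` is the `1`-norm `∫|α| = lim_N ∫|∑_{k≤N} α(k)|` of `α ∈ I₁`. -/
def Norm1Is (P : PreIntegrationSpace X I) (α : ℕ → I) (L : ℝ) : Prop :=
  Tendsto (fun N => P.integ (P.abs (psum P α N))) atTop (𝓝 L)

/-- Addition in `I₁` by interleaving two representations. -/
def addSeq (P : PreIntegrationSpace X I) (α β : ℕ → I) : ℕ → I :=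
  fun m => if m % 2 = 0 then α (m / 2) else β (m / 2)

/-- Negation of a representation, termwise. -/
def negSeq (P : PreIntegrationSpace X I) (β : ℕ → I) : ℕ → I :=
  fun m => P.smul (-1) (β m)

/-- Subtraction `α − β` of representations. -/
def subSeq (P : PreIntegrationSpace X I) (α β : ℕ → I) : ℕ → I :=
  addSeq P α (negSeq P β)

namespace I1Aux

variable {X I : Type*} (P : PreIntegrationSpace X I)

lemma smul_one (i : I) : P.smul 1 i = i := by
  apply P.lam_set _ _ (P.dom_smul 1 i)
  intro x hx
  rw [P.dom_smul] at hx
  rw [P.f_smul 1 i x hx, one_mul]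

lemma integ_smul (a : ℝ) (i : I) : P.integ (P.smul a i) = a * P.integ i := by
  have h := P.pis1 a 0 i i
  have e : P.add (P.smul a i) (P.smul 0 i) = P.smul a i := by
    apply P.lam_set
    · rw [P.dom_add, P.dom_smul, P.dom_smul, Set.inter_self]
    · intro x hx
      rw [P.dom_add, P.dom_smul, P.dom_smul, Set.inter_self] at hx
      rw [P.f_add _ _ x (by rw [P.dom_smul, P.dom_smul]; exact ⟨hx, hx⟩),
        P.f_smul 0 i x hx, P.f_smul a i x hx, zero_mul, add_zero]
  rw [e] at h
  rw [h]; ring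

lemma integ_add (i j : I) : P.integ (P.add i j) = P.integ i + P.integ j := by
  have h := P.pis1 1 1 i j
  rw [smul_one, smul_one] at h
  rw [h]; ring

lemma integ_zero_smul (i : I) : P.integ (P.smul 0 i) = 0 := by
  rw [integ_smul]; ring

lemma integ_mono {i j : I} (h : ∀ x, x ∈ P.dom i → x ∈ P.dom j → P.f i x ≤ P.f j x) :
    P.integ i ≤ P.integ j := by
  by_contra hc
  push_neg at hc
  set k := P.add j (P.smul (-1) i) with hk
  have hik : P.integ k = P.integ j - P.integ i := by
    rw [integ_add, integ_smul]; ring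
  have h2 := P.pis2 (P.add i (P.smul (-1) j)) (fun _ => P.smul 0 i) 0
    (fun m x hx => by
      rw [P.dom_smul] at hx
      rw [P.f_smul 0 i x hx, zero_mul])
    (by
      have : (fun n => ∑ k ∈ Finset.range n, P.integ (P.smul 0 i)) = fun n => 0 := by
        funext n; simp [integ_zero_smul]
      rw [this]; exact tendsto_const_nhds)
    (by
      rw [integ_add, integ_smul]
      linarith)
  obtain ⟨x, hx, _, ℓ', hℓ't, hℓ'⟩ := h2
  rw [P.dom_add, P.dom_smul] at hx
  have hfx : P.f (P.add i (P.smul (-1) j)) x = P.f i x - P.f j x := by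
    rw [P.f_add _ _ x (by rw [P.dom_smul]; exact hx),
      P.f_smul (-1) j x hx.2]
    ring
  have hℓ'0 : ℓ' = 0 := by
    have : (fun n => ∑ k ∈ Finset.range n, P.f (P.smul 0 i) x) = fun n => 0 := by
      funext n
      have : P.f (P.smul 0 i) x = 0 := by rw [P.f_smul 0 i x hx.1, zero_mul]
      simp [this]
    rw [this] at hℓ't
    exact tendsto_nhds_unique hℓ't tendsto_const_nhds
  rw [hfx, hℓ'0] at hℓ'
  have := h x hx.1 hx.2
  linarith

lemma f_eq_integ_eq {i j : I} (hdom : P.dom i = P.dom j)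
    (h : ∀ x, x ∈ P.dom i → P.f i x = P.f j x) : P.integ i = P.integ j := by
  rw [P.lam_set i j hdom h]

lemma integ_abs_nonneg (i : I) : 0 ≤ P.integ (P.abs i) := by
  rw [← integ_zero_smul P i]
  apply integ_mono
  intro x hx hx'
  rw [P.dom_smul] at hx
  rw [P.dom_abs] at hx'
  rw [P.f_smul 0 i x hx, P.f_abs i x hx', zero_mul]
  exact abs_nonneg _

lemma abs_smul_neg_one (i : I) : P.abs (P.smul (-1) i) = P.abs i := by
  apply P.lam_set
  · rw [P.dom_abs, P.dom_smul, P.dom_abs]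
  · intro x hx
    rw [P.dom_abs, P.dom_smul] at hx
    rw [P.f_abs _ x (by rwa [P.dom_smul]), P.f_smul (-1) i x hx,
      P.f_abs i x hx]
    rw [neg_one_mul, abs_neg]

lemma integ_abs_smul_neg_one (i : I) :
    P.integ (P.abs (P.smul (-1) i)) = P.integ (P.abs i) := by
  rw [abs_smul_neg_one]

/-- `rsum δ a n` represents `δ a + δ (a+1) + ⋯ + δ (a+n)`. -/
def rsum (δ : ℕ → I) (a : ℕ) : ℕ → I
  | 0 => δ a
  | n + 1 => P.add (rsum δ a n) (δ (a + n + 1))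

lemma mem_dom_rsum {δ : ℕ → I} {a : ℕ} {x : X} :
    ∀ {n : ℕ}, x ∈ P.dom (rsum P δ a n) ↔ ∀ k ≤ n, x ∈ P.dom (δ (a + k))
  | 0 => by
    constructor
    · intro h k hk
      interval_cases k
      simpa [rsum] using h
    · intro h; simpa [rsum] using h 0 le_rfl
  | n + 1 => by
    rw [rsum, P.dom_add]
    constructor
    · rintro ⟨h1, h2⟩ k hk
      rcases Nat.lt_or_ge k (n + 1) with h | h
      · exact mem_dom_rsum.1 h1 k (Nat.lt_succ_iff.1 h)
      · have : k = n + 1 := le_antisymm hk h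
        subst this
        simpa [Nat.add_assoc] using h2
    · intro h
      refine ⟨mem_dom_rsum.2 fun k hk => h k (hk.trans (Nat.le_succ n)), ?_⟩
      simpa [Nat.add_assoc] using h (n + 1) le_rfl

lemma f_rsum {δ : ℕ → I} {a : ℕ} {x : X} :
    ∀ {n : ℕ}, x ∈ P.dom (rsum P δ a n) →
      P.f (rsum P δ a n) x = ∑ k ∈ Finset.range (n + 1), P.f (δ (a + k)) x
  | 0, h => by simp [rsum]
  | n + 1, h => by
    have h' := h
    rw [rsum, P.dom_add] at h'
    rw [rsum, P.f_add _ _ x h', Finset.sum_range_succ,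
      f_rsum h'.1, Nat.add_assoc]

lemma integ_rsum {δ : ℕ → I} {a : ℕ} :
    ∀ n : ℕ, P.integ (rsum P δ a n) = ∑ k ∈ Finset.range (n + 1), P.integ (δ (a + k))
  | 0 => by simp [rsum]
  | n + 1 => by
    rw [rsum, integ_add, integ_rsum n, Finset.sum_range_succ, Finset.sum_range_succ,
      Finset.sum_range_succ, Nat.add_assoc]

lemma psum_eq_rsum (δ : ℕ → I) : ∀ n : ℕ, psum P δ n = rsum P δ 0 n
  | 0 => rfl
  | n + 1 => by
    show P.add (psum P δ n) (δ (n + 1)) = P.add (rsum P δ 0 n) (δ (0 + n + 1))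
    rw [psum_eq_rsum δ n, Nat.zero_add]

lemma mem_dom_psum {δ : ℕ → I} {x : X} {n : ℕ} :
    x ∈ P.dom (psum P δ n) ↔ ∀ k ≤ n, x ∈ P.dom (δ k) := by
  rw [psum_eq_rsum, mem_dom_rsum]
  simp

lemma f_psum {δ : ℕ → I} {x : X} {n : ℕ} (h : x ∈ P.dom (psum P δ n)) :
    P.f (psum P δ n) x = ∑ k ∈ Finset.range (n + 1), P.f (δ k) x := by
  rw [psum_eq_rsum] at h ⊢
  rw [f_rsum P h]
  simp

/-- The master comparison lemma: if `f i = ∑_{k<n} f (g k)` pointwise on the common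
domain, then `∫|i| ≤ ∑_{k<n} ∫|g k|`. -/
lemma master_fin (i : I) (g : ℕ → I) (n : ℕ) (hn : 1 ≤ n)
    (h : ∀ x, x ∈ P.dom i → (∀ k < n, x ∈ P.dom (g k)) →
      P.f i x = ∑ k ∈ Finset.range n, P.f (g k) x) :
    P.integ (P.abs i) ≤ ∑ k ∈ Finset.range n, P.integ (P.abs (g k)) := by
  have key : P.integ (P.abs i) ≤ P.integ (rsum P (fun k => P.abs (g k)) 0 (n - 1)) := by
    apply integ_mono
    intro x hxi hxr
    rw [P.dom_abs] at hxi
    have hdoms : ∀ k < n, x ∈ P.dom (g k) := by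
      intro k hk
      have := (mem_dom_rsum P).1 hxr k (by omega)
      rwa [Nat.zero_add, P.dom_abs] at this
    rw [P.f_abs i x hxi, f_rsum P hxr, h x hxi hdoms]
    have hrw : ∀ k ∈ Finset.range (n - 1 + 1), P.f (P.abs (g (0 + k))) x = |P.f (g k) x| := by
      intro k hk
      rw [Finset.mem_range] at hk
      rw [Nat.zero_add, P.f_abs (g k) x (hdoms k (by omega))]
    rw [Finset.sum_congr rfl hrw]
    have hn1 : n - 1 + 1 = n := by omega
    rw [hn1]
    exact Finset.abs_sum_le_sum_abs _ _
  have : P.integ (rsum P (fun k => P.abs (g k)) 0 (n - 1)) =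
      ∑ k ∈ Finset.range n, P.integ (P.abs (g k)) := by
    rw [integ_rsum]
    have hn1 : n - 1 + 1 = n := by omega
    rw [hn1]
    exact Finset.sum_congr rfl fun k _ => by rw [Nat.zero_add]
  linarith

lemma integ_abs_rsum_le {δ : ℕ → I} {a n : ℕ} :
    P.integ (P.abs (rsum P δ a n)) ≤ ∑ k ∈ Finset.range (n + 1), P.integ (P.abs (δ (a + k))) := by
  apply master_fin P _ (fun k => δ (a + k)) (n + 1) (by omega)
  intro x hx _
  exact f_rsum P hx

lemma sum_range_shift_le_tail {g : ℕ → ℝ} (hg : ∀ k, 0 ≤ g k) (hsum : Summable g)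
    (a m : ℕ) : ∑ k ∈ Finset.range m, g (a + k) ≤ ∑' k, g (k + a) := by
  have hs : Summable fun k => g (k + a) := (summable_nat_add_iff a).2 hsum
  calc ∑ k ∈ Finset.range m, g (a + k) = ∑ k ∈ Finset.range m, g (k + a) := by
        exact Finset.sum_congr rfl fun k _ => by rw [Nat.add_comm]
    _ ≤ ∑' k, g (k + a) := Summable.sum_le_tsum _ (fun k _ => hg _) hs

lemma integ_abs_rsum_le_tail {δ : ℕ → I} (hsum : Summable fun k => P.integ (P.abs (δ k)))
    (a n : ℕ) :
    P.integ (P.abs (rsum P δ a n)) ≤ ∑' k, P.integ (P.abs (δ (k + a))) := by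
  refine (integ_abs_rsum_le P).trans ?_
  exact sum_range_shift_le_tail (fun k => integ_abs_nonneg P _) hsum a (n + 1)

lemma tail_le_tail {g : ℕ → ℝ} (hg : ∀ k, 0 ≤ g k) (hsum : Summable g) {a b : ℕ}
    (hab : a ≤ b) : ∑' k, g (k + b) ≤ ∑' k, g (k + a) := by
  set h : ℕ → ℝ := fun k => g (k + a) with hh
  have hsh : Summable h := (summable_nat_add_iff a).2 hsum
  have h1 : (fun k => g (k + b)) = fun k => h (k + (b - a)) := by
    funext k; simp only [hh]; congr 1; omega
  rw [h1]
  have := hsh.sum_add_tsum_nat_add (b - a)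
  have hnn : 0 ≤ ∑ i ∈ Finset.range (b - a), h i :=
    Finset.sum_nonneg fun i _ => hg _
  linarith

lemma tendsto_tail_zero (g : ℕ → ℝ) :
    Tendsto (fun m => ∑' k, g (k + m)) atTop (𝓝 0) := tendsto_sum_nat_add g

lemma summable_of_inI1 {δ : ℕ → I} (h : InI1 P δ) :
    Summable fun k => P.integ (P.abs (δ k)) := by
  obtain ⟨L, hL⟩ := h
  apply summable_of_sum_range_le (c := L) (fun k => integ_abs_nonneg P _)
  intro n
  have hmono : Monotone fun N => ∑ k ∈ Finset.range N, P.integ (P.abs (δ k)) := by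
    intro a b hab
    exact Finset.sum_le_sum_of_subset_of_nonneg (Finset.range_subset_range.2 hab)
      fun k _ _ => integ_abs_nonneg P _
  exact hmono.ge_of_tendsto hL n

lemma inI1_of_summable {δ : ℕ → I} (h : Summable fun k => P.integ (P.abs (δ k))) :
    InI1 P δ := ⟨_, h.hasSum.tendsto_sum_nat⟩

/-- `∫|psum δ m| ≤ ∫|psum δ n| + (tail from m+1)` for `m ≤ n`, in both directions. -/
lemma dist_psum_le {δ : ℕ → I} (hsum : Summable fun k => P.integ (P.abs (δ k)))
    {m n : ℕ} (hmn : m < n) :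
    |P.integ (P.abs (psum P δ n)) - P.integ (P.abs (psum P δ m))| ≤
      ∑' k, P.integ (P.abs (δ (k + (m + 1)))) := by
  set c := rsum P δ (m + 1) (n - m - 1) with hc
  have hfc : ∀ x, x ∈ P.dom (psum P δ n) → x ∈ P.dom (psum P δ m) → x ∈ P.dom c →
      P.f (psum P δ n) x = P.f (psum P δ m) x + P.f c x := by
    intro x hxn hxm hxc
    rw [f_psum P hxn, f_psum P hxm, f_rsum P hxc]
    have h1 : n - m - 1 + 1 = n - m := by omega
    rw [h1]
    rw [← Finset.sum_range_add_sum_Ico _ (show m + 1 ≤ n + 1 by omega)]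
    congr 1
    rw [Finset.sum_Ico_eq_sum_range]
    apply Finset.sum_congr (by congr 1; omega)
    intro k _
    congr 1
  have h1 : P.integ (P.abs (psum P δ n)) ≤ P.integ (P.abs (psum P δ m)) +
      P.integ (P.abs c) := by
    have := master_fin P (psum P δ n)
      (fun k => if k = 0 then psum P δ m else c) 2 (by omega)
      (by
        intro x hx hd
        have hd0 : x ∈ P.dom (psum P δ m) := by simpa using hd 0 (by omega)
        have hd1 : x ∈ P.dom c := by simpa using hd 1 (by omega)
        rw [Finset.sum_range_succ, Finset.sum_range_one]
        show P.f (psum P δ n) x = P.f (psum P δ m) x + P.f c x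
        exact hfc x hx hd0 hd1)
    simpa [Finset.sum_range_succ] using this
  have h2 : P.integ (P.abs (psum P δ m)) ≤ P.integ (P.abs (psum P δ n)) +
      P.integ (P.abs c) := by
    have := master_fin P (psum P δ m)
      (fun k => if k = 0 then psum P δ n else P.smul (-1) c) 2 (by omega)
      (by
        intro x hx hd
        have hd0 : x ∈ P.dom (psum P δ n) := by simpa using hd 0 (by omega)
        have hd1 : x ∈ P.dom c := by
          have := hd 1 (by omega)
          simp only [if_neg one_ne_zero] at this
          rwa [P.dom_smul] at this
        rw [Finset.sum_range_succ, Finset.sum_range_one]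
        show P.f (psum P δ m) x = P.f (psum P δ n) x + P.f (P.smul (-1) c) x
        rw [P.f_smul _ _ x hd1]
        have hx' : x ∈ P.dom (psum P δ n) := by
          rw [mem_dom_psum] at hx hd0 ⊢
          intro k hk
          rcases le_or_gt k m with h | h
          · exact hx k h
          · rw [mem_dom_rsum] at hd1
            have := hd1 (k - m - 1) (by omega)
            have he : m + 1 + (k - m - 1) = k := by omega
            rwa [he] at this
        have := hfc x hx' hx hd1
        rw [this]; ring)
    have : P.integ (P.abs (psum P δ m)) ≤ P.integ (P.abs (psum P δ n)) +
        P.integ (P.abs (P.smul (-1) c)) := by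
      simpa [Finset.sum_range_succ] using this
    rwa [integ_abs_smul_neg_one] at this
  have hcb : P.integ (P.abs c) ≤ ∑' k, P.integ (P.abs (δ (k + (m + 1)))) :=
    integ_abs_rsum_le_tail P hsum _ _
  rw [abs_le]
  constructor <;> linarith

lemma norm_exists {δ : ℕ → I} (hsum : Summable fun k => P.integ (P.abs (δ k))) :
    ∃ L, Norm1Is P δ L := by
  have hcauchy : CauchySeq fun N => P.integ (P.abs (psum P δ N)) := by
    apply cauchySeq_of_le_tendsto_0 (fun N => ∑' k, P.integ (P.abs (δ (k + N))))
    · intro n m N hn hm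
      rcases lt_trichotomy n m with h | h | h
      · rw [Real.dist_eq, abs_sub_comm]
        refine (dist_psum_le P hsum h).trans ?_
        exact tail_le_tail (fun k => integ_abs_nonneg P _) hsum (by omega)
      · subst h; simp [Real.dist_eq]
        exact tsum_nonneg fun k => integ_abs_nonneg P _
      · rw [Real.dist_eq]
        refine (dist_psum_le P hsum h).trans ?_
        exact tail_le_tail (fun k => integ_abs_nonneg P _) hsum (by omega)
    · exact tendsto_tail_zero (fun k => P.integ (P.abs (δ k)))
  exact cauchySeq_tendsto_of_complete hcauchy

lemma norm_nonneg_of {δ : ℕ → I} {L : ℝ} (h : Norm1Is P δ L) : 0 ≤ L :=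
  ge_of_tendsto h (Filter.Eventually.of_forall fun N => integ_abs_nonneg P _)

lemma psum_le_norm_add_tail {δ : ℕ → I} {L : ℝ} (hL : Norm1Is P δ L)
    (hsum : Summable fun k => P.integ (P.abs (δ k))) (n : ℕ) :
    P.integ (P.abs (psum P δ n)) ≤ L + ∑' k, P.integ (P.abs (δ (k + (n + 1)))) := by
  have hev : ∀ᶠ N in atTop, P.integ (P.abs (psum P δ n)) ≤
      P.integ (P.abs (psum P δ N)) + ∑' k, P.integ (P.abs (δ (k + (n + 1)))) := by
    filter_upwards [eventually_gt_atTop n] with N hN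
    have := dist_psum_le P hsum hN
    rw [abs_le] at this
    linarith [this.1]
  exact ge_of_tendsto (hL.add tendsto_const_nhds) hev

lemma subSeq_two_mul (a b : ℕ → I) (h : ℕ) : subSeq P a b (2 * h) = a h := by
  simp [subSeq, addSeq, negSeq, Nat.mul_mod_right, Nat.mul_div_cancel_left h (by norm_num : 0 < 2)]

lemma subSeq_two_mul_add_one (a b : ℕ → I) (h : ℕ) :
    subSeq P a b (2 * h + 1) = P.smul (-1) (b h) := by
  have h1 : (2 * h + 1) % 2 = 1 := by omega
  have h2 : (2 * h + 1) / 2 = h := by omega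
  simp [subSeq, addSeq, negSeq, h1, h2]

lemma sum_range_two_mul (G : ℕ → ℝ) :
    ∀ H : ℕ, ∑ j ∈ Finset.range (2 * H), G j =
      ∑ h ∈ Finset.range H, (G (2 * h) + G (2 * h + 1))
  | 0 => by simp
  | H + 1 => by
    have h1 : 2 * (H + 1) = 2 * H + 1 + 1 := by omega
    rw [h1, Finset.sum_range_succ, Finset.sum_range_succ, Finset.sum_range_succ,
      sum_range_two_mul G H]
    ring

lemma sum_f_subSeq (a b : ℕ → I) (x : X) (H : ℕ)
    (hb : ∀ h < H, x ∈ P.dom (b h)) :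
    ∑ j ∈ Finset.range (2 * H), P.f (subSeq P a b j) x =
      ∑ h ∈ Finset.range H, P.f (a h) x - ∑ h ∈ Finset.range H, P.f (b h) x := by
  rw [sum_range_two_mul]
  rw [← Finset.sum_sub_distrib]
  apply Finset.sum_congr rfl
  intro h hh
  rw [Finset.mem_range] at hh
  rw [subSeq_two_mul, subSeq_two_mul_add_one, P.f_smul _ _ x (hb h hh)]
  ring

lemma sum_integ_abs_subSeq (a b : ℕ → I) (H : ℕ) :
    ∑ j ∈ Finset.range (2 * H), P.integ (P.abs (subSeq P a b j)) =
      ∑ h ∈ Finset.range H, (P.integ (P.abs (a h)) + P.integ (P.abs (b h))) := by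
  rw [sum_range_two_mul]
  apply Finset.sum_congr rfl
  intro h _
  rw [subSeq_two_mul, subSeq_two_mul_add_one, integ_abs_smul_neg_one]

lemma summable_subSeq {a b : ℕ → I} (ha : Summable fun k => P.integ (P.abs (a k)))
    (hb : Summable fun k => P.integ (P.abs (b k))) :
    Summable fun j => P.integ (P.abs (subSeq P a b j)) := by
  apply summable_of_sum_range_le
    (c := (∑' k, P.integ (P.abs (a k))) + ∑' k, P.integ (P.abs (b k)))
    (fun j => integ_abs_nonneg P _)
  intro n
  calc ∑ j ∈ Finset.range n, P.integ (P.abs (subSeq P a b j))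
      ≤ ∑ j ∈ Finset.range (2 * n), P.integ (P.abs (subSeq P a b j)) :=
        Finset.sum_le_sum_of_subset_of_nonneg (Finset.range_subset_range.2 (by omega))
          fun k _ _ => integ_abs_nonneg P _
    _ = ∑ h ∈ Finset.range n, (P.integ (P.abs (a h)) + P.integ (P.abs (b h))) :=
        sum_integ_abs_subSeq P a b n
    _ = (∑ h ∈ Finset.range n, P.integ (P.abs (a h))) +
        ∑ h ∈ Finset.range n, P.integ (P.abs (b h)) := Finset.sum_add_distrib
    _ ≤ _ := by
        gcongr
        · exact Summable.sum_le_tsum _ (fun k _ => integ_abs_nonneg P _) ha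
        · exact Summable.sum_le_tsum _ (fun k _ => integ_abs_nonneg P _) hb

lemma tendsto_two_mul_add_one : Tendsto (fun H : ℕ => 2 * H + 1) atTop atTop :=
  tendsto_atTop_mono (f := fun H : ℕ => H) (fun H => by show H ≤ 2 * H + 1; omega) tendsto_id

lemma norm_triangle {a b c : ℕ → I} {L1 L2 L3 : ℝ}
    (h1 : Norm1Is P (subSeq P a b) L1) (h2 : Norm1Is P (subSeq P b c) L2)
    (h3 : Norm1Is P (subSeq P a c) L3) : L3 ≤ L1 + L2 := by
  have key : ∀ H : ℕ, P.integ (P.abs (psum P (subSeq P a c) (2 * H + 1))) ≤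
      P.integ (P.abs (psum P (subSeq P a b) (2 * H + 1))) +
      P.integ (P.abs (psum P (subSeq P b c) (2 * H + 1))) := by
    intro H
    have := master_fin P (psum P (subSeq P a c) (2 * H + 1))
      (fun k => if k = 0 then psum P (subSeq P a b) (2 * H + 1)
        else psum P (subSeq P b c) (2 * H + 1)) 2 (by omega)
      (by
        intro x hx hd
        have hd0 : x ∈ P.dom (psum P (subSeq P a b) (2 * H + 1)) := by
          simpa using hd 0 (by omega)
        have hd1 : x ∈ P.dom (psum P (subSeq P b c) (2 * H + 1)) := by
          simpa using hd 1 (by omega)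
        rw [Finset.sum_range_succ, Finset.sum_range_one]
        show P.f (psum P (subSeq P a c) (2 * H + 1)) x =
          P.f (psum P (subSeq P a b) (2 * H + 1)) x +
          P.f (psum P (subSeq P b c) (2 * H + 1)) x
        have he : 2 * H + 1 + 1 = 2 * (H + 1) := by omega
        have hdc : ∀ h < H + 1, x ∈ P.dom (c h) := by
          intro h hh
          rw [mem_dom_psum] at hx
          have := hx (2 * h + 1) (by omega)
          rw [subSeq_two_mul_add_one, P.dom_smul] at this
          exact this
        have hdb : ∀ h < H + 1, x ∈ P.dom (b h) := by
          intro h hh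
          rw [mem_dom_psum] at hd0
          have := hd0 (2 * h + 1) (by omega)
          rw [subSeq_two_mul_add_one, P.dom_smul] at this
          exact this
        rw [f_psum P hx, f_psum P hd0, f_psum P hd1, he,
          sum_f_subSeq P a c x (H + 1) hdc,
          sum_f_subSeq P a b x (H + 1) hdb,
          sum_f_subSeq P b c x (H + 1) hdc]
        ring)
    simpa [Finset.sum_range_succ] using this
  have ht : Tendsto (fun H : ℕ => 2 * H + 1) atTop atTop := tendsto_two_mul_add_one
  exact le_of_tendsto_of_tendsto' (h3.comp ht) ((h1.comp ht).add (h2.comp ht)) key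

lemma pair_lt_sq {p k t : ℕ} : Nat.pair p k < t * t ↔ p < t ∧ k < t := by
  constructor
  · intro h
    have h1 := Nat.max_sq_add_min_le_pair p k
    have h2 : max p k ^ 2 < t * t :=
      lt_of_le_of_lt (le_trans (Nat.le_add_right _ _) h1) h
    rw [pow_two] at h2
    have h3 : max p k < t := by
      by_contra hc
      push_neg at hc
      exact absurd h2 (not_lt.2 (Nat.mul_le_mul hc hc))
    exact ⟨lt_of_le_of_lt (le_max_left _ _) h3, lt_of_le_of_lt (le_max_right _ _) h3⟩
  · rintro ⟨hp, hk⟩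
    have h1 := Nat.pair_lt_max_add_one_sq p k
    have h2 : (max p k + 1) ^ 2 ≤ t * t := by
      rw [pow_two]
      have : max p k + 1 ≤ t := by omega
      exact Nat.mul_le_mul this this
    exact lt_of_lt_of_le h1 h2

lemma sum_unpair_sq (F : ℕ → ℕ → ℝ) (t : ℕ) :
    ∑ j ∈ Finset.range (t * t), F (Nat.unpair j).1 (Nat.unpair j).2 =
      ∑ p ∈ Finset.range t, ∑ k ∈ Finset.range t, F p k := by
  rw [← Finset.sum_product']
  apply Finset.sum_nbij' (i := fun j => Nat.unpair j) (j := fun pr => Nat.pair pr.1 pr.2)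
  · intro j hj
    rw [Finset.mem_range] at hj
    simp only [Finset.mem_product, Finset.mem_range]
    have := Nat.pair_unpair j
    constructor
    · exact (pair_lt_sq.1 (by rwa [this])).1
    · exact (pair_lt_sq.1 (by rwa [this])).2
  · intro pr hpr
    simp only [Finset.mem_product, Finset.mem_range] at hpr
    rw [Finset.mem_range]
    exact pair_lt_sq.2 hpr
  · intro j _
    exact Nat.pair_unpair j
  · intro pr _
    simp
  · intro j _
    rfl

end I1Aux

/-- The representation obtained from `Θ p` by lumping the first `N p + 1` terms. -/
def repFn {X I : Type*} (P : PreIntegrationSpace X I) (Θ : ℕ → ℕ → I) (N : ℕ → ℕ)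
    (p k : ℕ) : I :=
  if k = 0 then psum P (Θ p) (N p) else Θ p (N p + k)

/-- The diagonal flattening of the doubly-indexed family `repFn`. -/
def flat {X I : Type*} (P : PreIntegrationSpace X I) (Θ : ℕ → ℕ → I) (N : ℕ → ℕ)
    (j : ℕ) : I :=
  repFn P Θ N (Nat.unpair j).1 (Nat.unpair j).2

namespace I1Aux

lemma key_estimate (P : PreIntegrationSpace X I) (G Θ : ℕ → ℕ → I) (N : ℕ → ℕ) (q t : ℕ)
    (hΘ0 : Θ 0 = G 0) (hΘS : ∀ p, Θ (p + 1) = subSeq P (G (p + 1)) (G p))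
    (hGsum : ∀ p, Summable fun k => P.integ (P.abs (G p k)))
    (hq : 1 ≤ q) (hqt : q + 2 ≤ t) (hNt : N q + 2 ≤ t) (ht : 2 ∣ t)
    (hNeven : ∀ p, 2 ∣ N p) (hNmono : ∀ p, N p + 2 ≤ N (p + 1)) :
    P.integ (P.abs (psum P (subSeq P (flat P Θ N) (G q)) (2 * (t * t) - 1))) ≤
      ((∑' k, P.integ (P.abs (G 0 (k + (N 1 + t) / 2)))) +
      ∑ p ∈ Finset.Ico 1 (q + 1), ∑' k, P.integ (P.abs (G p (k + (N p + t) / 2)))) +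
      ∑ p ∈ Finset.Ico (q + 1) t, P.integ (P.abs (psum P (Θ p) (N p + t - 1))) := by
  set α := flat P Θ N with hα
  set O : ℕ → ℕ := fun p => (N p + t) / 2 with hO
  have hNmono' : Monotone N := monotone_nat_of_le_succ fun p => by have := hNmono p; omega
  have hO2 : ∀ p, 2 * O p = N p + t := by
    intro p
    obtain ⟨a, ha⟩ := hNeven p; obtain ⟨b, hb⟩ := ht
    simp only [hO]; omega
  have hOmono : ∀ p, O p < O (p + 1) := by
    intro p
    have h1 := hO2 p; have h2 := hO2 (p + 1); have := hNmono p
    omega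
  have htt : t < t * t := by nlinarith
  have hO1V0 : O 1 ≤ N 0 + t := by
    have := hO2 1
    have : N 1 ≤ N q := hNmono' hq
    have := hO2 1
    omega
  have hOq : O q < t * t := by
    have := hO2 q
    omega
  -- the pieces
  set piece : ℕ → I := fun p =>
    if p = 0 then rsum P (G 0) (O 1) (N 0 + t - O 1 - 1)
    else if p < q then P.smul (-1) (rsum P (G p) (O p) (O (p + 1) - O p - 1))
    else if p = q then P.smul (-1) (rsum P (G q) (O q) (t * t - O q - 1))
    else rsum P (Θ p) 0 (N p + t - 1) with hpiece
  have piece0 : piece 0 = rsum P (G 0) (O 1) (N 0 + t - O 1 - 1) := by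
    simp only [hpiece, if_pos rfl]
  have pieceMid : ∀ p, 1 ≤ p → p < q →
      piece p = P.smul (-1) (rsum P (G p) (O p) (O (p + 1) - O p - 1)) := by
    intro p h1 h2
    simp only [hpiece, if_neg (by omega : ¬ p = 0), if_pos h2]
  have pieceQ : piece q = P.smul (-1) (rsum P (G q) (O q) (t * t - O q - 1)) := by
    simp only [hpiece, if_neg (by omega : ¬ q = 0), if_neg (lt_irrefl q)]
    exact if_pos trivial
  have pieceHi : ∀ p, q < p → piece p = rsum P (Θ p) 0 (N p + t - 1) := by
    intro p h1
    simp only [hpiece, if_neg (by omega : ¬ p = 0), if_neg (by omega : ¬ p < q),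
      if_neg (by omega : ¬ p = q)]
  have hmaster := master_fin P (psum P (subSeq P α (G q)) (2 * (t * t) - 1)) piece t
    (by omega) ?_
  · refine hmaster.trans ?_
    -- bound the pieces
    have split : ∑ p ∈ Finset.range t, P.integ (P.abs (piece p)) =
        P.integ (P.abs (piece 0)) +
        (∑ p ∈ Finset.Ico 1 (q + 1), P.integ (P.abs (piece p))) +
        ∑ p ∈ Finset.Ico (q + 1) t, P.integ (P.abs (piece p)) := by
      rw [← Finset.sum_range_add_sum_Ico _ (show q + 1 ≤ t by omega), Finset.range_eq_Ico,
        Finset.sum_eq_sum_Ico_succ_bot (by omega : 0 < q + 1)]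
      try norm_num
    rw [split]
    have b0 : P.integ (P.abs (piece 0)) ≤ ∑' k, P.integ (P.abs (G 0 (k + O 1))) := by
      rw [piece0]
      exact integ_abs_rsum_le_tail P (hGsum 0) _ _
    have bmid : ∀ p ∈ Finset.Ico 1 (q + 1),
        P.integ (P.abs (piece p)) ≤ ∑' k, P.integ (P.abs (G p (k + O p))) := by
      intro p hp
      rw [Finset.mem_Ico] at hp
      rcases lt_or_eq_of_le (Nat.lt_succ_iff.1 hp.2) with h | h
      · rw [pieceMid p hp.1 h, integ_abs_smul_neg_one]
        exact integ_abs_rsum_le_tail P (hGsum p) _ _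
      · rw [h]
        rw [pieceQ, integ_abs_smul_neg_one]
        exact integ_abs_rsum_le_tail P (hGsum q) _ _
    have bhi : ∀ p ∈ Finset.Ico (q + 1) t,
        P.integ (P.abs (piece p)) = P.integ (P.abs (psum P (Θ p) (N p + t - 1))) := by
      intro p hp
      rw [Finset.mem_Ico] at hp
      rw [pieceHi p hp.1, psum_eq_rsum]
    have b0' : P.integ (P.abs (piece 0)) ≤
        ∑' k, P.integ (P.abs (G 0 (k + (N 1 + t) / 2))) := by
      simpa only [hO] using b0
    have bmid' : ∀ p ∈ Finset.Ico 1 (q + 1), P.integ (P.abs (piece p)) ≤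
        ∑' k, P.integ (P.abs (G p (k + (N p + t) / 2))) := by
      intro p hp
      simpa only [hO] using bmid p hp
    exact add_le_add (add_le_add b0' (Finset.sum_le_sum bmid'))
      (le_of_eq (Finset.sum_congr rfl bhi))
  -- the pointwise identity
  intro x hx hdp
  have hidx : 2 * (t * t) - 1 + 1 = 2 * (t * t) := by omega
  have hsub : ∀ j < 2 * (t * t), x ∈ P.dom (subSeq P α (G q) j) := by
    intro j hj
    rw [mem_dom_psum] at hx
    exact hx j (by omega)
  have hdomα : ∀ h < t * t, x ∈ P.dom (α h) := by
    intro h hh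
    have := hsub (2 * h) (by omega)
    rwa [subSeq_two_mul] at this
  have hdomGq : ∀ h < t * t, x ∈ P.dom (G q h) := by
    intro h hh
    have := hsub (2 * h + 1) (by omega)
    rwa [subSeq_two_mul_add_one, P.dom_smul] at this
  have hdomrep : ∀ p < t, ∀ k < t, x ∈ P.dom (repFn P Θ N p k) := by
    intro p hp k hk
    have := hdomα (Nat.pair p k) (pair_lt_sq.2 ⟨hp, hk⟩)
    rw [hα] at this
    unfold flat at this
    rwa [Nat.unpair_pair] at this
  have hdomΘ : ∀ p < t, ∀ k < N p + t, x ∈ P.dom (Θ p k) := by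
    intro p hp k hk
    rcases le_or_gt k (N p) with h | h
    · have := hdomrep p hp 0 (by omega)
      rw [repFn, if_pos rfl, mem_dom_psum] at this
      exact this k h
    · have h2 : k - N p < t := by omega
      have h3 : 1 ≤ k - N p := by omega
      have := hdomrep p hp (k - N p) h2
      rw [repFn, if_neg (by omega)] at this
      have he : N p + (k - N p) = k := by omega
      rwa [he] at this
  have hdomGlow : ∀ p, p + 1 < t → ∀ h < O (p + 1), x ∈ P.dom (G p h) := by
    intro p hp h hh
    have h2 : 2 * h + 1 < N (p + 1) + t := by have := hO2 (p + 1); omega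
    have := hdomΘ (p + 1) hp (2 * h + 1) h2
    rw [hΘS p, subSeq_two_mul_add_one, P.dom_smul] at this
    exact this
  -- value of each inner block
  have hrepval : ∀ p ∈ Finset.range t,
      (∑ k ∈ Finset.range t, P.f (repFn P Θ N p k) x) =
        ∑ k ∈ Finset.range (N p + t), P.f (Θ p k) x := by
    intro p hp
    rw [Finset.mem_range] at hp
    have ht1 : t = t - 1 + 1 := by omega
    conv_lhs => rw [ht1, Finset.sum_range_succ']
    have e0 : P.f (repFn P Θ N p 0) x = ∑ k ∈ Finset.range (N p + 1), P.f (Θ p k) x := by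
      have hd : x ∈ P.dom (psum P (Θ p) (N p)) := by
        have := hdomrep p hp 0 (by omega)
        rwa [repFn, if_pos rfl] at this
      rw [repFn, if_pos rfl, f_psum P hd]
    have e1 : ∀ k ∈ Finset.range (t - 1), P.f (repFn P Θ N p (k + 1)) x =
        P.f (Θ p (N p + 1 + k)) x := by
      intro k _
      rw [repFn, if_neg (by omega)]
      have : N p + (k + 1) = N p + 1 + k := by omega
      rw [this]
    rw [e0, Finset.sum_congr rfl e1]
    have : ∑ k ∈ Finset.range (t - 1), P.f (Θ p (N p + 1 + k)) x =
        ∑ k ∈ Finset.Ico (N p + 1) (N p + t), P.f (Θ p k) x := by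
      rw [Finset.sum_Ico_eq_sum_range]
      apply Finset.sum_congr (by congr 1; omega) fun k _ => rfl
    rw [this, add_comm, Finset.sum_range_add_sum_Ico _ (show N p + 1 ≤ N p + t by omega)]
  -- value of blocks 1 ≤ p < t as differences
  have hΘval : ∀ p, 1 ≤ p → p < t →
      (∑ k ∈ Finset.range (N p + t), P.f (Θ p k) x) =
        (∑ h ∈ Finset.range (O p), P.f (G p h) x) -
        ∑ h ∈ Finset.range (O p), P.f (G (p - 1) h) x := by
    intro p h1 h2
    obtain ⟨p', rfl⟩ : ∃ p', p = p' + 1 := ⟨p - 1, by omega⟩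
    have hb : ∀ h < O (p' + 1), x ∈ P.dom (G p' h) := hdomGlow p' h2
    rw [← hO2 (p' + 1), hΘS p', sum_f_subSeq P (G (p' + 1)) (G p') x (O (p' + 1)) hb]
    simp
  -- the chunk values
  have chunk0 : P.f (piece 0) x =
      (∑ h ∈ Finset.range (N 0 + t), P.f (G 0 h) x) -
        ∑ h ∈ Finset.range (O 1), P.f (G 0 h) x := by
    have hd : x ∈ P.dom (rsum P (G 0) (O 1) (N 0 + t - O 1 - 1)) := by
      have := hdp 0 (by omega)
      rwa [piece0] at this
    rw [piece0, f_rsum P hd]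
    have hlen : N 0 + t - O 1 - 1 + 1 = N 0 + t - O 1 := by
      have h01 : O 1 < N 0 + t := by
        have e1 := hO2 1
        have hq1 : N 1 ≤ N q := hNmono' hq
        omega
      omega
    rw [hlen]
    rw [← Finset.sum_range_add_sum_Ico (fun h => P.f (G 0 h) x) hO1V0]
    rw [Finset.sum_Ico_eq_sum_range]
    ring
  have chunkMid : ∀ p, 1 ≤ p → p < q → P.f (piece p) x =
      (∑ h ∈ Finset.range (O p), P.f (G p h) x) -
        ∑ h ∈ Finset.range (O (p + 1)), P.f (G p h) x := by
    intro p h1 h2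
    have hd : x ∈ P.dom (rsum P (G p) (O p) (O (p + 1) - O p - 1)) := by
      have := hdp p (by omega)
      rwa [pieceMid p h1 h2, P.dom_smul] at this
    rw [pieceMid p h1 h2, P.f_smul _ _ x hd, f_rsum P hd]
    have hlen : O (p + 1) - O p - 1 + 1 = O (p + 1) - O p := by
      have := hOmono p; omega
    rw [hlen]
    rw [← Finset.sum_range_add_sum_Ico (fun h => P.f (G p h) x) (le_of_lt (hOmono p))]
    rw [Finset.sum_Ico_eq_sum_range]
    ring
  have chunkQv : P.f (piece q) x =
      (∑ h ∈ Finset.range (O q), P.f (G q h) x) -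
        ∑ h ∈ Finset.range (t * t), P.f (G q h) x := by
    have hd : x ∈ P.dom (rsum P (G q) (O q) (t * t - O q - 1)) := by
      have := hdp q (by omega)
      rwa [pieceQ, P.dom_smul] at this
    rw [pieceQ, P.f_smul _ _ x hd, f_rsum P hd]
    have hlen : t * t - O q - 1 + 1 = t * t - O q := by omega
    rw [hlen]
    rw [← Finset.sum_range_add_sum_Ico (fun h => P.f (G q h) x) (le_of_lt hOq)]
    rw [Finset.sum_Ico_eq_sum_range]
    ring
  have chunkHi : ∀ p ∈ Finset.Ico (q + 1) t, P.f (piece p) x =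
      ∑ k ∈ Finset.range (N p + t), P.f (Θ p k) x := by
    intro p hp
    rw [Finset.mem_Ico] at hp
    have hd : x ∈ P.dom (rsum P (Θ p) 0 (N p + t - 1)) := by
      have := hdp p hp.2
      rwa [pieceHi p hp.1] at this
    rw [pieceHi p hp.1, f_rsum P hd]
    have hlen : N p + t - 1 + 1 = N p + t := by omega
    rw [hlen]
    exact Finset.sum_congr rfl fun k _ => by rw [Nat.zero_add]
  -- assemble
  rw [f_psum P hx, hidx, sum_f_subSeq P α (G q) x (t * t) hdomGq]
  have hA : (∑ h ∈ Finset.range (t * t), P.f (α h) x) =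
      ∑ p ∈ Finset.range t, ∑ k ∈ Finset.range t, P.f (repFn P Θ N p k) x :=
    sum_unpair_sq (fun p k => P.f (repFn P Θ N p k) x) t
  rw [hA, Finset.sum_congr rfl hrepval]
  have E2 : (∑ p ∈ Finset.range t, ∑ k ∈ Finset.range (N p + t), P.f (Θ p k) x) =
      (∑ k ∈ Finset.range (N 0 + t), P.f (Θ 0 k) x) +
      (∑ p ∈ Finset.Ico 1 (q + 1), ∑ k ∈ Finset.range (N p + t), P.f (Θ p k) x) +
      ∑ p ∈ Finset.Ico (q + 1) t, ∑ k ∈ Finset.range (N p + t), P.f (Θ p k) x := by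
    rw [← Finset.sum_range_add_sum_Ico _ (show q + 1 ≤ t by omega), Finset.range_eq_Ico,
      Finset.sum_eq_sum_Ico_succ_bot (by omega : 0 < q + 1)]
  have E3 : (∑ p ∈ Finset.range t, P.f (piece p) x) =
      P.f (piece 0) x +
      (∑ p ∈ Finset.Ico 1 (q + 1), P.f (piece p) x) +
      ∑ p ∈ Finset.Ico (q + 1) t, P.f (piece p) x := by
    rw [← Finset.sum_range_add_sum_Ico _ (show q + 1 ≤ t by omega), Finset.range_eq_Ico,
      Finset.sum_eq_sum_Ico_succ_bot (by omega : 0 < q + 1)]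
  have E4 : (∑ k ∈ Finset.range (N 0 + t), P.f (Θ 0 k) x) =
      ∑ h ∈ Finset.range (N 0 + t), P.f (G 0 h) x := by
    rw [hΘ0]
  have E6 : (∑ p ∈ Finset.Ico 1 (q + 1), ∑ k ∈ Finset.range (N p + t), P.f (Θ p k) x) =
      ((∑ h ∈ Finset.range (O q), P.f (G q h) x) -
        ∑ h ∈ Finset.range (O 0), P.f (G 0 h) x) -
      ∑ i ∈ Finset.range q, ((∑ h ∈ Finset.range (O (i + 1)), P.f (G i h) x) -
        ∑ h ∈ Finset.range (O i), P.f (G i h) x) := by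
    have e1 : (∑ p ∈ Finset.Ico 1 (q + 1), ∑ k ∈ Finset.range (N p + t), P.f (Θ p k) x) =
        ∑ i ∈ Finset.range q, ∑ k ∈ Finset.range (N (i + 1) + t), P.f (Θ (i + 1) k) x := by
      rw [Finset.sum_Ico_eq_sum_range]
      have hq1 : q + 1 - 1 = q := by omega
      rw [hq1]
      exact Finset.sum_congr rfl fun i _ => by rw [Nat.add_comm 1 i]
    rw [e1]
    have e2 : ∀ i ∈ Finset.range q,
        (∑ k ∈ Finset.range (N (i + 1) + t), P.f (Θ (i + 1) k) x) =
        ((∑ h ∈ Finset.range (O (i + 1)), P.f (G (i + 1) h) x) -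
          ∑ h ∈ Finset.range (O (i + 1)), P.f (G i h) x) := by
      intro i hi
      rw [Finset.mem_range] at hi
      have := hΘval (i + 1) (by omega) (by omega)
      simpa using this
    rw [Finset.sum_congr rfl e2]
    have e3 : ∀ i ∈ Finset.range q,
        ((∑ h ∈ Finset.range (O (i + 1)), P.f (G (i + 1) h) x) -
          ∑ h ∈ Finset.range (O (i + 1)), P.f (G i h) x) =
        ((∑ h ∈ Finset.range (O (i + 1)), P.f (G (i + 1) h) x) -
          ∑ h ∈ Finset.range (O i), P.f (G i h) x) -
        ((∑ h ∈ Finset.range (O (i + 1)), P.f (G i h) x) -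
          ∑ h ∈ Finset.range (O i), P.f (G i h) x) := by
      intro i _; ring
    rw [Finset.sum_congr rfl e3, Finset.sum_sub_distrib]
    have tsub := Finset.sum_range_sub
      (f := fun j => ∑ h ∈ Finset.range (O j), P.f (G j h) x) q
    rw [tsub]
  have E7 : (∑ p ∈ Finset.Ico 1 (q + 1), P.f (piece p) x) =
      (∑ p ∈ Finset.Ico 1 q, P.f (piece p) x) + P.f (piece q) x :=
    Finset.sum_Ico_succ_top hq _
  have E9 : (∑ p ∈ Finset.Ico 1 q, P.f (piece p) x) =
      ∑ p ∈ Finset.Ico 1 q, ((∑ h ∈ Finset.range (O p), P.f (G p h) x) -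
        ∑ h ∈ Finset.range (O (p + 1)), P.f (G p h) x) := by
    apply Finset.sum_congr rfl
    intro p hp
    rw [Finset.mem_Ico] at hp
    exact chunkMid p hp.1 hp.2
  have E10 : (∑ i ∈ Finset.range q, ((∑ h ∈ Finset.range (O (i + 1)), P.f (G i h) x) -
        ∑ h ∈ Finset.range (O i), P.f (G i h) x)) =
      ((∑ h ∈ Finset.range (O 1), P.f (G 0 h) x) -
        ∑ h ∈ Finset.range (O 0), P.f (G 0 h) x) +
      ∑ p ∈ Finset.Ico 1 q, ((∑ h ∈ Finset.range (O (p + 1)), P.f (G p h) x) -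
        ∑ h ∈ Finset.range (O p), P.f (G p h) x) := by
    rw [Finset.range_eq_Ico, Finset.sum_eq_sum_Ico_succ_bot (by omega : 0 < q)]
  have E11 : (∑ p ∈ Finset.Ico 1 q, ((∑ h ∈ Finset.range (O p), P.f (G p h) x) -
        ∑ h ∈ Finset.range (O (p + 1)), P.f (G p h) x)) =
      - ∑ p ∈ Finset.Ico 1 q, ((∑ h ∈ Finset.range (O (p + 1)), P.f (G p h) x) -
        ∑ h ∈ Finset.range (O p), P.f (G p h) x) := by
    rw [← Finset.sum_neg_distrib]
    exact Finset.sum_congr rfl fun p _ => by ring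
  have E12 : (∑ p ∈ Finset.Ico (q + 1) t, P.f (piece p) x) =
      ∑ p ∈ Finset.Ico (q + 1) t, ∑ k ∈ Finset.range (N p + t), P.f (Θ p k) x :=
    Finset.sum_congr rfl chunkHi
  linarith [E2, E3, E4, E6, E7, E9, E10, E11, E12, chunk0, chunkQv]

end I1Aux

/-- Completeness of `I₁` with respect to the `1`-norm: every Cauchy sequence
`Γ : ℕ → I₁` with a strictly increasing modulus `M` (so that
`∫|Γ(n) − Γ(m)| ≤ 2^{-p}` for `n, m ≥ M(p)`) converges in `1`-norm to some
`α ∈ I₁`, with an explicit modulus of convergence. -/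
theorem I1_complete (P : PreIntegrationSpace X I)
    (Γ : ℕ → ℕ → I) (M : ℕ → ℕ) (d : ℕ → ℕ → ℝ)
    (hΓ : ∀ n, InI1 P (Γ n))
    (hM : StrictMono M)
    (hd : ∀ n m, Norm1Is P (subSeq P (Γ n) (Γ m)) (d n m))
    (hcauchy : ∀ p n m, M p ≤ n → M p ≤ m → d n m ≤ (1 / 2) ^ p) :
    ∃ α : ℕ → I, InI1 P α ∧
      ∃ r : ℕ → ℝ,
        (∀ n, Norm1Is P (subSeq P α (Γ n)) (r n)) ∧
        Tendsto r atTop (𝓝 0) ∧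
        ∃ M'' : ℕ → ℕ, ∀ p n, M'' p ≤ n → r n ≤ (1 / 2) ^ p := by
  classical
  have hΓs : ∀ n, Summable fun k => P.integ (P.abs (Γ n k)) :=
    fun n => I1Aux.summable_of_inI1 P (hΓ n)
  set G : ℕ → ℕ → I := fun p => Γ (M p) with hG
  have hGs : ∀ p, Summable fun k => P.integ (P.abs (G p k)) := fun p => hΓs (M p)
  set Θ : ℕ → ℕ → I := fun p =>
    Nat.rec (motive := fun _ => ℕ → I) (G 0)
      (fun p' _ => subSeq P (G (p' + 1)) (G p')) p with hΘdef
  have hΘ0 : Θ 0 = G 0 := rfl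
  have hΘS : ∀ p, Θ (p + 1) = subSeq P (G (p + 1)) (G p) := fun p => rfl
  have hΘs : ∀ p, Summable fun k => P.integ (P.abs (Θ p k)) := by
    intro p
    match p with
    | 0 => exact hGs 0
    | p' + 1 =>
      rw [hΘS]
      exact I1Aux.summable_subSeq P (hGs (p' + 1)) (hGs p')
  have hΘnorm : ∀ p, Norm1Is P (Θ (p + 1)) (d (M (p + 1)) (M p)) := by
    intro p
    rw [hΘS]
    exact hd _ _
  have hdb : ∀ p, d (M (p + 1)) (M p) ≤ (1 / 2) ^ p :=
    fun p => hcauchy p _ _ (hM.monotone (Nat.le_succ p)) le_rfl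
  -- choice of the truncation points
  have hKex : ∀ p : ℕ, ∃ K : ℕ, ∑' k, P.integ (P.abs (Θ p (k + K))) ≤ (1 / 2) ^ p := by
    intro p
    have ht0 := I1Aux.tendsto_tail_zero (fun k => P.integ (P.abs (Θ p k)))
    have hpos : (0 : ℝ) < (1 / 2) ^ p := by positivity
    obtain ⟨K, hK⟩ := (ht0.eventually_lt_const hpos).exists
    exact ⟨K, le_of_lt hK⟩
  choose K hK using hKex
  set N : ℕ → ℕ := fun p =>
    Nat.rec (2 * K 0) (fun p' Np' => Np' + 2 + 2 * K (p' + 1)) p with hNdef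
  have hN0 : N 0 = 2 * K 0 := rfl
  have hNS : ∀ p, N (p + 1) = N p + 2 + 2 * K (p + 1) := fun p => rfl
  have hNeven : ∀ p, 2 ∣ N p := by
    intro p
    induction p with
    | zero => rw [hN0]; omega
    | succ p' ih => rw [hNS]; omega
  have hNmono : ∀ p, N p + 2 ≤ N (p + 1) := fun p => by rw [hNS]; omega
  have hKN : ∀ p, K p ≤ N p := by
    intro p
    match p with
    | 0 => rw [hN0]; omega
    | p' + 1 => rw [hNS]; omega
  have hτN : ∀ p m, N p ≤ m → ∑' k, P.integ (P.abs (Θ p (k + m))) ≤ (1 / 2) ^ p := by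
    intro p m hm
    refine le_trans (I1Aux.tail_le_tail (fun k => I1Aux.integ_abs_nonneg P _) (hΘs p)
      (le_trans (hKN p) hm)) (hK p)
  -- the limit representation
  set α := flat P Θ N with hα
  -- bound on the norm of each lump
  set C : ℕ → ℝ := fun p =>
    Nat.rec (Classical.choose (I1Aux.norm_exists P (hΘs 0)))
      (fun p' _ => d (M (p' + 1)) (M p')) p with hCdef
  have hC0 : Norm1Is P (Θ 0) (C 0) := Classical.choose_spec (I1Aux.norm_exists P (hΘs 0))
  have hCnorm : ∀ p, Norm1Is P (Θ p) (C p) := by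
    intro p
    match p with
    | 0 => exact hC0
    | p' + 1 => exact hΘnorm p'
  have hCb : ∀ p, 1 ≤ p → C p ≤ (1 / 2) ^ (p - 1) := by
    intro p hp
    match p, hp with
    | p' + 1, _ => simpa using hdb p'
  have hlump : ∀ p m, N p ≤ m + 1 →
      P.integ (P.abs (psum P (Θ p) m)) ≤ C p + (1 / 2) ^ p := by
    intro p m hm
    refine le_trans (I1Aux.psum_le_norm_add_tail P (hCnorm p) (hΘs p) m) ?_
    have := hτN p (m + 1) hm
    linarith
  -- partial sums of |α| are uniformly bounded
  have hrepb : ∀ p t', (∑ k ∈ Finset.range t', P.integ (P.abs (repFn P Θ N p k))) ≤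
      C p + (1 / 2) ^ p + (1 / 2) ^ p := by
    intro p t'
    rcases Nat.eq_zero_or_pos t' with rfl | ht'
    · simp only [Finset.range_zero, Finset.sum_empty]
      have h1 := I1Aux.integ_abs_nonneg P (psum P (Θ p) (N p))
      have h2 : (0:ℝ) < (1/2)^p := by positivity
      have h3 : 0 ≤ C p := I1Aux.norm_nonneg_of P (hCnorm p)
      linarith
    · have ht1 : t' = t' - 1 + 1 := by omega
      rw [ht1, Finset.sum_range_succ']
      have e0 : P.integ (P.abs (repFn P Θ N p 0)) =
          P.integ (P.abs (psum P (Θ p) (N p))) := by rw [repFn, if_pos rfl]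
      have e1 : ∀ k ∈ Finset.range (t' - 1),
          P.integ (P.abs (repFn P Θ N p (k + 1))) =
          P.integ (P.abs (Θ p (N p + 1 + k))) := by
        intro k _
        rw [repFn, if_neg (by omega)]
        have he : N p + (k + 1) = N p + 1 + k := by omega
        rw [he]
      rw [e0, Finset.sum_congr rfl e1]
      have hb1 : (∑ k ∈ Finset.range (t' - 1), P.integ (P.abs (Θ p (N p + 1 + k)))) ≤
          ∑' k, P.integ (P.abs (Θ p (k + (N p + 1)))) :=
        I1Aux.sum_range_shift_le_tail (fun k => I1Aux.integ_abs_nonneg P _) (hΘs p) _ _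
      have hb2 := hτN p (N p + 1) (by omega)
      have hb3 := hlump p (N p) (by omega)
      linarith
  have hsq : ∀ J : ℕ, (∑ j ∈ Finset.range (J * J), P.integ (P.abs (α j))) =
      ∑ p ∈ Finset.range J, ∑ k ∈ Finset.range J, P.integ (P.abs (repFn P Θ N p k)) :=
    fun J => I1Aux.sum_unpair_sq (fun p k => P.integ (P.abs (repFn P Θ N p k))) J
  have hαs : Summable fun j => P.integ (P.abs (α j)) := by
    apply summable_of_sum_range_le (c := C 0 + 2 + 8) (fun j => I1Aux.integ_abs_nonneg P _)
    intro J
    have hJ : J ≤ (J + 1) * (J + 1) := by nlinarith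
    calc (∑ j ∈ Finset.range J, P.integ (P.abs (α j)))
        ≤ ∑ j ∈ Finset.range ((J + 1) * (J + 1)), P.integ (P.abs (α j)) :=
          Finset.sum_le_sum_of_subset_of_nonneg (Finset.range_subset_range.2 hJ)
            (fun k _ _ => I1Aux.integ_abs_nonneg P _)
      _ = ∑ p ∈ Finset.range (J + 1), ∑ k ∈ Finset.range (J + 1),
            P.integ (P.abs (repFn P Θ N p k)) := hsq (J + 1)
      _ ≤ ∑ p ∈ Finset.range (J + 1), (C p + (1 / 2) ^ p + (1 / 2) ^ p) :=
          Finset.sum_le_sum fun p _ => hrepb p (J + 1)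
      _ ≤ C 0 + 2 + 8 := by
          rw [Finset.range_eq_Ico, Finset.sum_eq_sum_Ico_succ_bot (by omega : 0 < J + 1)]
          have hb1 : (∑ p ∈ Finset.Ico 1 (J + 1), (C p + (1 / 2 : ℝ) ^ p + (1 / 2) ^ p)) ≤
              ∑ p ∈ Finset.Ico 1 (J + 1), 4 * (1 / 2 : ℝ) ^ p := by
            apply Finset.sum_le_sum
            intro p hp
            rw [Finset.mem_Ico] at hp
            have h1 := hCb p hp.1
            have h2 : ((1:ℝ) / 2) ^ (p - 1) = 2 * (1 / 2) ^ p := by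
              obtain ⟨p', rfl⟩ : ∃ p', p = p' + 1 := ⟨p - 1, by omega⟩
              simp [pow_succ]
              ring
            rw [h2] at h1
            linarith
          have hb2 : (∑ p ∈ Finset.Ico 1 (J + 1), 4 * (1 / 2 : ℝ) ^ p) ≤ 8 := by
            have h3 : (∑ p ∈ Finset.Ico 1 (J + 1), 4 * (1 / 2 : ℝ) ^ p) ≤
                ∑ p ∈ Finset.range (J + 1), 4 * (1 / 2 : ℝ) ^ p := by
              apply Finset.sum_le_sum_of_subset_of_nonneg
              · rw [Finset.range_eq_Ico]
                exact Finset.Ico_subset_Ico (by omega) le_rfl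
              · intro p _ _; positivity
            have h4 : (∑ p ∈ Finset.range (J + 1), 4 * (1 / 2 : ℝ) ^ p) =
                4 * ∑ p ∈ Finset.range (J + 1), (1 / 2 : ℝ) ^ p := by
              rw [Finset.mul_sum]
            have h5 := sum_geometric_two_le (J + 1)
            linarith
          have h6 : ((1:ℝ)/2) ^ 0 = 1 := pow_zero _
          have h7 : (0:ℝ) ≤ (1/2)^0 := by positivity
          linarith
  have hInI1 : InI1 P α := I1Aux.inI1_of_summable P hαs
  -- existence of the norms r n
  have hsubs : ∀ n, Summable fun j => P.integ (P.abs (subSeq P α (Γ n) j)) :=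
    fun n => I1Aux.summable_subSeq P hαs (hΓs n)
  have hrex : ∀ n, ∃ L, Norm1Is P (subSeq P α (Γ n)) L :=
    fun n => I1Aux.norm_exists P (hsubs n)
  choose r hr using hrex
  -- the key quantitative estimate
  have key : ∀ q, 1 ≤ q → r (M q) ≤ 3 * (1 / 2) ^ q := by
    intro q hq
    set tf : ℕ → ℕ := fun j => 2 * (N q + q + j + 2) with htf
    have hcond : ∀ j, q + 2 ≤ tf j ∧ N q + 2 ≤ tf j ∧ 2 ∣ tf j := by
      intro j
      refine ⟨by simp only [htf]; omega, by simp only [htf]; omega, ⟨N q + q + j + 2, rfl⟩⟩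
    have hb : ∀ j, P.integ (P.abs (psum P (subSeq P α (G q)) (2 * (tf j * tf j) - 1))) ≤
        ((∑' k, P.integ (P.abs (G 0 (k + (N 1 + tf j) / 2)))) +
        ∑ p ∈ Finset.Ico 1 (q + 1), ∑' k, P.integ (P.abs (G p (k + (N p + tf j) / 2)))) +
        ∑ p ∈ Finset.Ico (q + 1) (tf j), P.integ (P.abs (psum P (Θ p) (N p + tf j - 1))) := by
      intro j
      exact I1Aux.key_estimate P G Θ N q (tf j) hΘ0 hΘS hGs hq (hcond j).1 (hcond j).2.1
        (hcond j).2.2 hNeven hNmono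
    have hthird : ∀ j, (∑ p ∈ Finset.Ico (q + 1) (tf j),
        P.integ (P.abs (psum P (Θ p) (N p + tf j - 1)))) ≤ 3 * (1 / 2) ^ q := by
      intro j
      have hterm : ∀ p ∈ Finset.Ico (q + 1) (tf j),
          P.integ (P.abs (psum P (Θ p) (N p + tf j - 1))) ≤ 3 * (1 / 2 : ℝ) ^ p := by
        intro p hp
        rw [Finset.mem_Ico] at hp
        have h1 : N p ≤ N p + tf j - 1 + 1 := by
          have := (hcond j).1; omega
        have h2 := hlump p (N p + tf j - 1) h1
        have h3 : C p ≤ (1/2 : ℝ) ^ (p - 1) := hCb p (by omega)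
        have h4 : ((1:ℝ)/2) ^ (p - 1) = 2 * (1/2) ^ p := by
          obtain ⟨p', rfl⟩ : ∃ p', p = p' + 1 := ⟨p - 1, by omega⟩
          simp [pow_succ]
          ring
        rw [h4] at h3
        linarith
      refine le_trans (Finset.sum_le_sum hterm) ?_
      rw [Finset.sum_Ico_eq_sum_range]
      have h5 : ∀ i ∈ Finset.range (tf j - (q + 1)), (3 : ℝ) * (1/2) ^ (q + 1 + i) =
          3 * (1/2) ^ (q + 1) * (1/2) ^ i := by
        intro i _
        rw [pow_add]
        ring
      rw [Finset.sum_congr rfl h5, ← Finset.mul_sum]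
      have h6 := sum_geometric_two_le (tf j - (q + 1))
      have h7 : (0:ℝ) < 3 * (1/2)^(q+1) := by positivity
      have h8 : (3:ℝ) * (1/2)^(q+1) * 2 = 3 * (1/2)^q := by
        rw [pow_succ]
        ring
      calc (3 : ℝ) * (1/2) ^ (q + 1) * ∑ i ∈ Finset.range (tf j - (q + 1)), (1/2 : ℝ) ^ i
          ≤ 3 * (1/2) ^ (q + 1) * 2 := by
            apply mul_le_mul_of_nonneg_left h6 (le_of_lt h7)
        _ = 3 * (1/2) ^ q := h8
    -- limits
    have hmain : Tendsto (fun j => P.integ (P.abs (psum P (subSeq P α (G q))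
        (2 * (tf j * tf j) - 1)))) atTop (𝓝 (r (M q))) := by
      have hgq : G q = Γ (M q) := rfl
      rw [hgq]
      refine (hr (M q)).comp ?_
      apply tendsto_atTop_mono (f := fun j : ℕ => j)
      · intro j
        have h1 : j ≤ tf j := by simp only [htf]; omega
        have h2 : tf j ≤ tf j * tf j := Nat.le_mul_of_pos_left _ (by simp only [htf]; omega)
        omega
      · exact tendsto_id
    have hεlim : Tendsto (fun j => ((∑' k, P.integ (P.abs (G 0 (k + (N 1 + tf j) / 2)))) +
        ∑ p ∈ Finset.Ico 1 (q + 1), ∑' k, P.integ (P.abs (G p (k + (N p + tf j) / 2)))) +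
        3 * (1/2 : ℝ) ^ q) atTop (𝓝 ((0 + ∑ _p ∈ Finset.Ico 1 (q + 1), (0:ℝ)) +
          3 * (1/2 : ℝ) ^ q)) := by
      apply Tendsto.add _ tendsto_const_nhds
      apply Tendsto.add
      · refine (I1Aux.tendsto_tail_zero (fun k => P.integ (P.abs (G 0 k)))).comp ?_
        apply tendsto_atTop_mono (f := fun j : ℕ => j)
        · intro j
          simp only [htf]
          omega
        · exact tendsto_id
      · apply tendsto_finset_sum
        intro p _
        refine (I1Aux.tendsto_tail_zero (fun k => P.integ (P.abs (G p k)))).comp ?_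
        apply tendsto_atTop_mono (f := fun j : ℕ => j)
        · intro j
          simp only [htf]
          omega
        · exact tendsto_id
    have hle := le_of_tendsto_of_tendsto' hmain hεlim
      (fun j => le_trans (hb j) (by
        have := hthird j
        linarith))
    simpa using hle
  -- conclusion
  have htri : ∀ n p, M p ≤ n → r n ≤ r (M (p + 1)) + d (M (p + 1)) n :=
    fun n p _ => I1Aux.norm_triangle P (hr (M (p + 1))) (hd (M (p + 1)) n) (hr n)
  have hrb : ∀ p n, M p ≤ n → r n ≤ (5 / 2) * (1 / 2) ^ p := by
    intro p n hn
    have h1 := htri n p hn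
    have h2 := key (p + 1) (by omega)
    have h3 : d (M (p + 1)) n ≤ (1 / 2) ^ p :=
      hcauchy p _ _ (hM.monotone (Nat.le_succ p)) hn
    have h4 : (3:ℝ) * (1/2) ^ (p + 1) = (3/2) * (1/2) ^ p := by
      rw [pow_succ]; ring
    rw [h4] at h2
    linarith
  have hfinal : ∀ p n, M (p + 2) ≤ n → r n ≤ (1 / 2) ^ p := by
    intro p n hn
    have h1 := hrb (p + 2) n hn
    have h2 : ((5:ℝ)/2) * (1/2) ^ (p + 2) = (5/8) * (1/2) ^ p := by
      rw [pow_succ, pow_succ]; ring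
    rw [h2] at h1
    have h3 : (0:ℝ) ≤ (1/2)^p := by positivity
    linarith
  refine ⟨α, hInI1, r, hr, ?_, ⟨fun p => M (p + 2), hfinal⟩⟩
  -- convergence of r to 0
  rw [Metric.tendsto_atTop]
  intro ε hε
  obtain ⟨p, hp⟩ := exists_pow_lt_of_lt_one hε (by norm_num : (1:ℝ)/2 < 1)
  refine ⟨M (p + 2), fun n hn => ?_⟩
  have h1 := hfinal p n hn
  have h2 : 0 ≤ r n := I1Aux.norm_nonneg_of P (hr n)
  rw [Real.dist_eq, sub_zero, abs_of_nonneg h2]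
  exact lt_of_le_of_lt h1 hp
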